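/- Let G = (V, E) be an undirected graph, and let a sampling phase produce a partial connectivity labeling C with a most-frequent label L_max. Consider a finish phase that processes, for every vertex u with C(u) ≠ L_max, all edges incident to u, applying a correct union operation to each such edge on the forest initialized from C. Then every edge of G with at least one endpoint outside the L_max-tree is processed, every edge with both endpoints in the L_max-tree connects vertices already in the same tree, and consequently the final root function is a correct connectivity labeling of G. -/
import Mathlib


/-- Two-phase execution: a sampling phase produces a height-one partial
connectivity labeling `C` with most-frequent label `Lmax`; a finish phase
applies correct union operations to all edges incident to vertices labeled
differently from `Lmax`, producing a final root function `R` that only merges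
trees of `C` (so `R` is still a partial connectivity labeling) and makes the
endpoints of every processed edge lie in the same tree.  Then every edge with
both endpoints in the `Lmax`-tree already connects vertices in the same tree,
and `R` is a correct connectivity labeling of `G`. -/
theorem sampled_finish_correct {V : Type*} (G : SimpleGraph V)
    (C : V → V) (Lmax : V)
    (hheight : ∀ v, C (C v) = C v)
    (hpartialC : ∀ u v, C u = C v → G.Reachable u v)
    (R : V → V)
    (hmono : ∀ u v, C u = C v → R u = R v)
    (hpartialR : ∀ u v, R u = R v → G.Reachable u v)
    (hprocessed : ∀ u v, G.Adj u v → (C u ≠ Lmax ∨ C v ≠ Lmax) → R u = R v) :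
    (∀ u v, G.Adj u v → C u = Lmax → C v = Lmax → R u = R v) ∧
    (∀ u v, R u = R v ↔ G.Reachable u v) := by
  have hedge : ∀ u v, G.Adj u v → R u = R v := by
    intro u v huv
    by_cases h1 : C u = Lmax
    · by_cases h2 : C v = Lmax
      · exact hmono u v (h1.trans h2.symm)
      · exact hprocessed u v huv (Or.inr h2)
    · exact hprocessed u v huv (Or.inl h1)
  refine ⟨fun u v huv _ _ => hedge u v huv, fun u v => ⟨hpartialR u v, ?_⟩⟩
  intro hr
  obtain ⟨w⟩ := hr
  induction w with
  | nil => rfl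
  | cons h _ ih => exact (hedge _ _ h).trans ih
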